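/- arXiv:0811.3784 — 6 statements merged into one kernel-verified Lean document; each statement's English description precedes it below -/
import Mathlib

section
/- Let z_1, …, z_d ∈ ℂ be distinct, L_0 ∈ Mat_N(ℂ), and a_i, b_i ∈ ℂ^N for 1 ≤ i ≤ d. Define L(w) = L_0 + Σ_{i=1}^d a_i b_iᵀ/(w − z_i). Then for all u, v ∈ ℂ \ {z_1,…,z_d} with u ≠ v: Σ_{i=1}^d [ (a_i b_iᵀ ⊗ I_N)·𝒫 − (I_N ⊗ a_i b_iᵀ)·𝒫 ] / ((u − z_i)(v − z_i)) = (1/(u − v)) · [ 𝒫 , L(u) ⊗ I_N + I_N ⊗ L(v) ], where [X,Y] = XY − YX denotes the matrix commutator. (This expresses that the linear r-matrix Poisson bracket {L(u) ⊗, L(v)} = [r(u−v), L(u)⊗I + I⊗L(v)] with rational r-matrix r(z) = 𝒫/z is induced by the canonical brackets {b_i^l, a_j^s} = δ_{ij} δ_{ls}.) -/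
open Matrix BigOperators
open scoped Kronecker

noncomputable section

/-- The permutation matrix `𝒫 = Σ_{i,j} e_{ij} ⊗ e_{ji}` in `Mat_{N²}(ℂ)`. -/
def permMat (N : ℕ) : Matrix (Fin N × Fin N) (Fin N × Fin N) ℂ :=
  ∑ i : Fin N, ∑ j : Fin N,
    (Matrix.single i j (1 : ℂ)) ⊗ₖ (Matrix.single j i (1 : ℂ))

lemma permMat_apply (N : ℕ) (p q r s : Fin N) :
    permMat N (p,q) (r,s) = if p = s ∧ q = r then 1 else 0 := by
  simp [permMat, Matrix.sum_apply, Matrix.single, ite_and]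
  aesop

lemma permMat_mul_kron (N : ℕ) (A B : Matrix (Fin N) (Fin N) ℂ) :
    permMat N * (A ⊗ₖ B) = (B ⊗ₖ A) * permMat N := by
  ext ⟨p,q⟩ ⟨r,s⟩
  simp [Matrix.mul_apply, Fintype.sum_prod_type, permMat_apply, ite_and, Finset.sum_ite_eq, Finset.sum_ite_eq', eq_comm, mul_comm]


lemma sub_kron {l n : ℕ} (A B : Matrix (Fin l) (Fin l) ℂ) (C : Matrix (Fin n) (Fin n) ℂ) :
    (A - B) ⊗ₖ C = A ⊗ₖ C - B ⊗ₖ C := by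
  ext ⟨p,q⟩ ⟨r,s⟩; simp [sub_mul]

lemma kron_sub {l n : ℕ} (A : Matrix (Fin l) (Fin l) ℂ) (B C : Matrix (Fin n) (Fin n) ℂ) :
    A ⊗ₖ (B - C) = A ⊗ₖ B - A ⊗ₖ C := by
  ext ⟨p,q⟩ ⟨r,s⟩; simp [mul_sub]

lemma sum_kron {l n d : ℕ} (A : Fin d → Matrix (Fin l) (Fin l) ℂ) (C : Matrix (Fin n) (Fin n) ℂ) :
    (∑ i, A i) ⊗ₖ C = ∑ i, (A i ⊗ₖ C) := by
  ext ⟨p,q⟩ ⟨r,s⟩; simp [Matrix.sum_apply, Finset.sum_mul]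

lemma kron_sum {l n d : ℕ} (A : Matrix (Fin l) (Fin l) ℂ) (C : Fin d → Matrix (Fin n) (Fin n) ℂ) :
    A ⊗ₖ (∑ i, C i) = ∑ i, (A ⊗ₖ C i) := by
  ext ⟨p,q⟩ ⟨r,s⟩; simp [Matrix.sum_apply, Finset.mul_sum]

/-- for distinct poles `z_1,…,z_d`, the additive Lax matrix
`L(w) = L_0 + Σ_i a_i b_iᵀ/(w − z_i)` satisfies, for `u ≠ v` away from the poles,
`Σ_i [(a_i b_iᵀ ⊗ I)𝒫 − (I ⊗ a_i b_iᵀ)𝒫]/((u−z_i)(v−z_i))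
  = (1/(u−v))·[𝒫, L(u) ⊗ I + I ⊗ L(v)]`. -/
theorem statement1 (N d : ℕ) (z : Fin d → ℂ) (hz : Function.Injective z)
    (L₀ : Matrix (Fin N) (Fin N) ℂ) (a b : Fin d → Fin N → ℂ)
    (L : ℂ → Matrix (Fin N) (Fin N) ℂ)
    (hL : ∀ w, L w = L₀ + ∑ i : Fin d, (w - z i)⁻¹ • Matrix.vecMulVec (a i) (b i))
    (u v : ℂ) (hu : ∀ i, u ≠ z i) (hv : ∀ i, v ≠ z i) (huv : u ≠ v) :
    ∑ i : Fin d, ((u - z i) * (v - z i))⁻¹ •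
        (((Matrix.vecMulVec (a i) (b i)) ⊗ₖ (1 : Matrix (Fin N) (Fin N) ℂ)) * permMat N -
          ((1 : Matrix (Fin N) (Fin N) ℂ) ⊗ₖ (Matrix.vecMulVec (a i) (b i))) * permMat N) =
    (u - v)⁻¹ •
      (permMat N * ((L u) ⊗ₖ (1 : Matrix (Fin N) (Fin N) ℂ) +
          (1 : Matrix (Fin N) (Fin N) ℂ) ⊗ₖ (L v)) -
        ((L u) ⊗ₖ (1 : Matrix (Fin N) (Fin N) ℂ) +
          (1 : Matrix (Fin N) (Fin N) ℂ) ⊗ₖ (L v)) * permMat N) := by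
  set P := permMat N with hP
  set I : Matrix (Fin N) (Fin N) ℂ := 1 with hI
  set S : Fin d → Matrix (Fin N) (Fin N) ℂ := fun i => Matrix.vecMulVec (a i) (b i) with hS
  -- rewrite RHS commutator
  have h1 : P * (L u ⊗ₖ I) = (I ⊗ₖ L u) * P := permMat_mul_kron N _ _
  have h2 : P * (I ⊗ₖ L v) = (L v ⊗ₖ I) * P := permMat_mul_kron N _ _
  have hD : L v - L u = ∑ i : Fin d, ((v - z i)⁻¹ - (u - z i)⁻¹) • S i := by
    rw [hL u, hL v]
    rw [add_sub_add_left_eq_sub, ← Finset.sum_sub_distrib]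
    exact Finset.sum_congr rfl fun i _ => (sub_smul _ _ _).symm
  have hrhs : P * (L u ⊗ₖ I + I ⊗ₖ L v) - (L u ⊗ₖ I + I ⊗ₖ L v) * P
      = ((L v - L u) ⊗ₖ I - I ⊗ₖ (L v - L u)) * P := by
    rw [mul_add, h1, h2, sub_kron, kron_sub]
    noncomm_ring
  rw [hrhs, hD]
  rw [sum_kron, kron_sum, ← Finset.sum_sub_distrib,
    Finset.sum_mul, Finset.smul_sum]
  refine Finset.sum_congr rfl fun i _ => ?_
  rw [Matrix.smul_kronecker, Matrix.kronecker_smul, ← smul_sub, smul_mul_assoc, smul_smul,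
    ← sub_mul]
  congr 1
  have h3 : u - z i ≠ 0 := sub_ne_zero.mpr (hu i)
  have h4 : v - z i ≠ 0 := sub_ne_zero.mpr (hv i)
  have h5 : u - v ≠ 0 := sub_ne_zero.mpr huv
  field_simp
  ring


end
end

section
/- Let z_0 ∈ ℂ and p, q ∈ ℂ^N, and define B(w) = I_N + p qᵀ/(w − z_0) for w ≠ z_0. Then for all u, v ∈ ℂ \ {z_0} with u ≠ v: [ (p ⊗ I_N)(I_N ⊗ qᵀ) − (I_N ⊗ p)(qᵀ ⊗ I_N) ] / ((u − z_0)(v − z_0)) = (1/(u − v)) · [ 𝒫 , B(u) ⊗ B(v) ], where [X,Y] = XY − YX. (This says that a single multiplicative factor B satisfies the quadratic r-matrix relation {B(u) ⊗, B(v)} = [r(u−v), B(u) ⊗ B(v)] with rational r-matrix r(z) = 𝒫/z, for the canonical brackets {q^l, p^s} = δ_{ls}.) -/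
open Matrix BigOperators
open scoped Kronecker

noncomputable section

/-- The Kronecker product `a ⊗ M` of a column vector `a ∈ ℂ^N` with an `N×N` matrix. -/
def colKron {N : ℕ} (a : Fin N → ℂ) (M : Matrix (Fin N) (Fin N) ℂ) :
    Matrix (Fin N × Fin N) (Fin N) ℂ :=
  fun ip j => a ip.1 * M ip.2 j

/-- The Kronecker product `M ⊗ a` of an `N×N` matrix with a column vector. -/
def kronCol {N : ℕ} (M : Matrix (Fin N) (Fin N) ℂ) (a : Fin N → ℂ) :
    Matrix (Fin N × Fin N) (Fin N) ℂ :=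
  fun ip j => M ip.1 j * a ip.2

/-- The Kronecker product `bᵀ ⊗ M` of a row vector with an `N×N` matrix. -/
def rowKron {N : ℕ} (b : Fin N → ℂ) (M : Matrix (Fin N) (Fin N) ℂ) :
    Matrix (Fin N) (Fin N × Fin N) ℂ :=
  fun i jq => b jq.1 * M i jq.2

/-- The Kronecker product `M ⊗ bᵀ` of an `N×N` matrix with a row vector. -/
def kronRow {N : ℕ} (M : Matrix (Fin N) (Fin N) ℂ) (b : Fin N → ℂ) :
    Matrix (Fin N) (Fin N × Fin N) ℂ :=
  fun i jq => M i jq.1 * b jq.2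

lemma permMat_apply_s2 (N : ℕ) (x y : Fin N × Fin N) :
    permMat N x y = if x.1 = y.2 ∧ x.2 = y.1 then 1 else 0 := by
  simp [permMat, Matrix.sum_apply, kroneckerMap_apply, Matrix.single, ite_and]
  aesop

lemma permMat_mul_apply (N : ℕ) (M : Matrix (Fin N × Fin N) (Fin N × Fin N) ℂ)
    (x y : Fin N × Fin N) : (permMat N * M) x y = M (x.2, x.1) y := by
  rw [Matrix.mul_apply, Fintype.sum_prod_type]
  simp [permMat_apply_s2, ite_and]

lemma mul_permMat_apply (N : ℕ) (M : Matrix (Fin N × Fin N) (Fin N × Fin N) ℂ)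
    (x y : Fin N × Fin N) : (M * permMat N) x y = M x (y.2, y.1) := by
  rw [Matrix.mul_apply, Fintype.sum_prod_type]
  simp [permMat_apply_s2, ite_and]

lemma prod1 {N : ℕ} (p q : Fin N → ℂ) (x y : Fin N × Fin N) :
    (colKron p 1 * kronRow 1 q) x y =
      p x.1 * (if x.2 = y.1 then 1 else 0) * q y.2 := by
  rw [Matrix.mul_apply]
  simp [colKron, kronRow, Matrix.one_apply, mul_ite, ite_mul, Finset.sum_ite_eq]

lemma prod2 {N : ℕ} (p q : Fin N → ℂ) (x y : Fin N × Fin N) :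
    (kronCol 1 p * rowKron q 1) x y =
      p x.2 * (if x.1 = y.2 then 1 else 0) * q y.1 := by
  rw [Matrix.mul_apply]
  simp [kronCol, rowKron, Matrix.one_apply, mul_ite, ite_mul, Finset.sum_ite_eq]

/-- for `B(w) = I + p qᵀ/(w − z₀)` and `u ≠ v` away from `z₀`,
`[(p ⊗ I)(I ⊗ qᵀ) − (I ⊗ p)(qᵀ ⊗ I)]/((u−z₀)(v−z₀)) = (1/(u−v))·[𝒫, B(u) ⊗ B(v)]`. -/
theorem statement2 (N : ℕ) (z₀ : ℂ) (p q : Fin N → ℂ)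
    (B : ℂ → Matrix (Fin N) (Fin N) ℂ)
    (hB : ∀ w, w ≠ z₀ → B w = 1 + (w - z₀)⁻¹ • Matrix.vecMulVec p q)
    (u v : ℂ) (hu : u ≠ z₀) (hv : v ≠ z₀) (huv : u ≠ v) :
    ((u - z₀) * (v - z₀))⁻¹ •
        (colKron p 1 * kronRow 1 q - kronCol 1 p * rowKron q 1) =
    (u - v)⁻¹ •
      (permMat N * ((B u) ⊗ₖ (B v)) - ((B u) ⊗ₖ (B v)) * permMat N) := by
  have hu' : u - z₀ ≠ 0 := sub_ne_zero.mpr hu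
  have hv' : v - z₀ ≠ 0 := sub_ne_zero.mpr hv
  have huv' : u - v ≠ 0 := sub_ne_zero.mpr huv
  have hBe : ∀ w, w ≠ z₀ → ∀ x y : Fin N,
      B w x y = (if x = y then 1 else 0) + (w - z₀)⁻¹ * (p x * q y) := by
    intro w hw x y
    rw [hB w hw]
    simp [Matrix.one_apply, Matrix.vecMulVec_apply]
  ext ⟨i, p'⟩ ⟨j, q'⟩
  rw [Matrix.smul_apply, Matrix.smul_apply, Matrix.sub_apply, Matrix.sub_apply,
    permMat_mul_apply, mul_permMat_apply, prod1, prod2,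
    kroneckerMap_apply, kroneckerMap_apply,
    hBe u hu, hBe u hu, hBe v hv, hBe v hv]
  simp only [smul_eq_mul]
  rcases eq_or_ne p' j with h1 | h1 <;> rcases eq_or_ne i q' with h2 | h2 <;>
    simp only [h1, h2, if_pos rfl, if_true, if_false] <;>
    field_simp <;> ring

end
end

section
/- Let τ ∈ ℂ with Im τ > 0 and s_0, s_1, s_2, s_3 ∈ ℂ, and let L(z) = s_0 σ_0 + (s_1/(πi)) σ_1 e^{πiz} φ(τ/2, z) + (s_2/(πi)) σ_2 e^{πiz} φ((1+τ)/2, z) + (s_3/(πi)) σ_3 φ(1/2, z) be Sklyanin's Lax matrix. Then for every z ∈ ℂ such that θ11(z|τ), θ11(z+1|τ) and θ11(z+τ|τ) are all nonzero: L(z+1) = σ_3 L(z) σ_3 and L(z+τ) = σ_1 L(z) σ_1. -/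
open Complex Matrix

noncomputable section

/-- The Jacobi theta function `θ11(z|τ)`. -/
def θ11 (τ z : ℂ) : ℂ :=
  ∑' n : ℤ, Complex.exp ((Real.pi : ℂ) * I * ((n : ℂ) + 1/2) ^ 2 * τ +
    2 * (Real.pi : ℂ) * I * ((n : ℂ) + 1/2) * (z + 1/2))

/-- `θ'11`, the `z`-derivative of `θ11(z|τ)` at `z = 0`. -/
def θ11' (τ : ℂ) : ℂ := deriv (θ11 τ) 0

/-- `φ(w,z) = θ11(w+z|τ) θ'11 / (θ11(w|τ) θ11(z|τ))`. -/
def phi (τ w z : ℂ) : ℂ := θ11 τ (w + z) * θ11' τ / (θ11 τ w * θ11 τ z)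

/-- Pauli matrix σ₁. -/
def σ1 : Matrix (Fin 2) (Fin 2) ℂ := !![0, 1; 1, 0]
/-- Pauli matrix σ₂. -/
def σ2 : Matrix (Fin 2) (Fin 2) ℂ := !![0, -I; I, 0]
/-- Pauli matrix σ₃. -/
def σ3 : Matrix (Fin 2) (Fin 2) ℂ := !![1, 0; 0, -1]
/-- σ₀ = I₂. -/
def σ0 : Matrix (Fin 2) (Fin 2) ℂ := 1

/-- Sklyanin's single-pole Lax matrix. -/
def sklyaninLax (τ s₀ s₁ s₂ s₃ z : ℂ) : Matrix (Fin 2) (Fin 2) ℂ :=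
  s₀ • σ0 +
  (s₁ / ((Real.pi : ℂ) * I) * Complex.exp ((Real.pi : ℂ) * I * z) * phi τ (τ / 2) z) • σ1 +
  (s₂ / ((Real.pi : ℂ) * I) * Complex.exp ((Real.pi : ℂ) * I * z) * phi τ ((1 + τ) / 2) z) • σ2 +
  (s₃ / ((Real.pi : ℂ) * I) * phi τ (1 / 2) z) • σ3

lemma exp_neg_pi_I : Complex.exp (-((Real.pi:ℂ) * I)) = -1 := by
  rw [Complex.exp_neg, Complex.exp_pi_mul_I]; norm_num

lemma theta_add_one (τ z : ℂ) : θ11 τ (z + 1) = - θ11 τ z := by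
  unfold θ11
  rw [← tsum_neg]
  refine tsum_congr fun n => ?_
  have h : (Real.pi : ℂ) * I * ((n : ℂ) + 1/2) ^ 2 * τ +
      2 * (Real.pi : ℂ) * I * ((n : ℂ) + 1/2) * (z + 1 + 1/2)
      = ((Real.pi : ℂ) * I * ((n : ℂ) + 1/2) ^ 2 * τ +
        2 * (Real.pi : ℂ) * I * ((n : ℂ) + 1/2) * (z + 1/2))
        + (n : ℂ) * (2 * (Real.pi : ℂ) * I) + (Real.pi : ℂ) * I := by ring
  rw [h, Complex.exp_add, Complex.exp_add, Complex.exp_int_mul_two_pi_mul_I,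
    Complex.exp_pi_mul_I]
  ring

lemma theta_add_tau (τ z : ℂ) :
    θ11 τ (z + τ) = -Complex.exp (-((Real.pi:ℂ) * I * τ) - 2 * (Real.pi:ℂ) * I * z) * θ11 τ z := by
  unfold θ11
  rw [← tsum_mul_left]
  conv_rhs => rw [← (Equiv.addRight (1:ℤ)).tsum_eq]
  refine tsum_congr fun n => ?_
  simp only [Equiv.coe_addRight]
  have h : (Real.pi : ℂ) * I * ((n : ℂ) + 1/2) ^ 2 * τ +
      2 * (Real.pi : ℂ) * I * ((n : ℂ) + 1/2) * (z + τ + 1/2)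
      = (-((Real.pi:ℂ) * I * τ) - 2 * (Real.pi:ℂ) * I * z)
        + ((Real.pi : ℂ) * I * ((↑(n + 1) : ℂ) + 1/2) ^ 2 * τ +
          2 * (Real.pi : ℂ) * I * ((↑(n + 1) : ℂ) + 1/2) * (z + 1/2))
        + (-((Real.pi:ℂ) * I)) := by push_cast; ring
  rw [h, Complex.exp_add, Complex.exp_add, exp_neg_pi_I]
  ring

lemma phi_add_one (τ w z : ℂ) : phi τ w (z + 1) = phi τ w z := by
  unfold phi
  rw [show w + (z + 1) = (w + z) + 1 by ring, theta_add_one, theta_add_one,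
    neg_mul, mul_neg, neg_div_neg_eq]

lemma phi_add_tau (τ w z : ℂ) :
    phi τ w (z + τ) = Complex.exp (-(2 * (Real.pi:ℂ) * I * w)) * phi τ w z := by
  unfold phi
  rw [show w + (z + τ) = (w + z) + τ by ring, theta_add_tau, theta_add_tau]
  have hsplit : Complex.exp (-((Real.pi:ℂ) * I * τ) - 2 * (Real.pi:ℂ) * I * (w + z))
      = Complex.exp (-(2 * (Real.pi:ℂ) * I * w)) *
        Complex.exp (-((Real.pi:ℂ) * I * τ) - 2 * (Real.pi:ℂ) * I * z) := by
    rw [← Complex.exp_add]; congr 1; ring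
  rw [hsplit]
  set k := Complex.exp (-((Real.pi:ℂ) * I * τ) - 2 * (Real.pi:ℂ) * I * z) with hk
  have hne : -k ≠ 0 := neg_ne_zero.mpr (Complex.exp_ne_zero _)
  have hnum : -(Complex.exp (-(2 * (Real.pi:ℂ) * I * w)) * k) * θ11 τ (w + z) * θ11' τ
      = -k * (Complex.exp (-(2 * (Real.pi:ℂ) * I * w)) * (θ11 τ (w + z) * θ11' τ)) := by ring
  have hden : θ11 τ w * (-k * θ11 τ z) = -k * (θ11 τ w * θ11 τ z) := by ring
  rw [hnum, hden, mul_div_mul_left _ _ hne, mul_div_assoc]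

lemma conj3 (a b c d : ℂ) :
    σ3 * (a • σ0 + b • σ1 + c • σ2 + d • σ3) * σ3
      = a • σ0 + (-b) • σ1 + (-c) • σ2 + d • σ3 := by
  ext i j
  fin_cases i <;> fin_cases j <;>
    simp [σ0, σ1, σ2, σ3, Matrix.mul_apply, Fin.sum_univ_two, Matrix.one_apply,
      Matrix.vecMul, dotProduct, Matrix.add_apply, Matrix.smul_apply, smul_eq_mul] <;>
    ring

lemma conj1 (a b c d : ℂ) :
    σ1 * (a • σ0 + b • σ1 + c • σ2 + d • σ3) * σ1
      = a • σ0 + b • σ1 + (-c) • σ2 + (-d) • σ3 := by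
  ext i j
  fin_cases i <;> fin_cases j <;>
    simp [σ0, σ1, σ2, σ3, Matrix.mul_apply, Fin.sum_univ_two, Matrix.one_apply,
      Matrix.vecMul, dotProduct, Matrix.add_apply, Matrix.smul_apply, smul_eq_mul] <;>
    ring

lemma exp_pi_I_add_one (z : ℂ) :
    Complex.exp ((Real.pi:ℂ) * I * (z + 1)) = -Complex.exp ((Real.pi:ℂ) * I * z) := by
  rw [show (Real.pi:ℂ) * I * (z + 1) = (Real.pi:ℂ) * I * z + (Real.pi:ℂ) * I by ring,
    Complex.exp_add, Complex.exp_pi_mul_I]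
  ring

/-- monodromy properties of Sklyanin's Lax matrix:
`L(z+1) = σ₃ L(z) σ₃` and `L(z+τ) = σ₁ L(z) σ₁`. -/
theorem statement7 (τ : ℂ) (hτ : 0 < τ.im) (s₀ s₁ s₂ s₃ : ℂ) (z : ℂ)
    (h1 : θ11 τ z ≠ 0) (h2 : θ11 τ (z + 1) ≠ 0) (h3 : θ11 τ (z + τ) ≠ 0) :
    sklyaninLax τ s₀ s₁ s₂ s₃ (z + 1) = σ3 * sklyaninLax τ s₀ s₁ s₂ s₃ z * σ3 ∧
    sklyaninLax τ s₀ s₁ s₂ s₃ (z + τ) = σ1 * sklyaninLax τ s₀ s₁ s₂ s₃ z * σ1 := by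
  constructor
  · have c1 : s₁ / ((Real.pi : ℂ) * I) * Complex.exp ((Real.pi : ℂ) * I * (z + 1)) *
        phi τ (τ / 2) (z + 1)
        = -(s₁ / ((Real.pi : ℂ) * I) * Complex.exp ((Real.pi : ℂ) * I * z) * phi τ (τ / 2) z) := by
      rw [phi_add_one, exp_pi_I_add_one]; ring
    have c2 : s₂ / ((Real.pi : ℂ) * I) * Complex.exp ((Real.pi : ℂ) * I * (z + 1)) *
        phi τ ((1 + τ) / 2) (z + 1)
        = -(s₂ / ((Real.pi : ℂ) * I) * Complex.exp ((Real.pi : ℂ) * I * z) *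
            phi τ ((1 + τ) / 2) z) := by
      rw [phi_add_one, exp_pi_I_add_one]; ring
    have c3 : s₃ / ((Real.pi : ℂ) * I) * phi τ (1 / 2) (z + 1)
        = s₃ / ((Real.pi : ℂ) * I) * phi τ (1 / 2) z := by
      rw [phi_add_one]
    unfold sklyaninLax
    rw [c1, c2, c3, conj3]
  · have E1 : Complex.exp ((Real.pi:ℂ) * I * (z + τ)) *
        Complex.exp (-(2 * (Real.pi:ℂ) * I * (τ / 2))) = Complex.exp ((Real.pi:ℂ) * I * z) := by
      rw [← Complex.exp_add]; congr 1; ring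
    have E2 : Complex.exp ((Real.pi:ℂ) * I * (z + τ)) *
        Complex.exp (-(2 * (Real.pi:ℂ) * I * ((1 + τ) / 2)))
        = -Complex.exp ((Real.pi:ℂ) * I * z) := by
      rw [← Complex.exp_add,
        show (Real.pi:ℂ) * I * (z + τ) + -(2 * (Real.pi:ℂ) * I * ((1 + τ) / 2))
          = (Real.pi:ℂ) * I * z + -((Real.pi:ℂ) * I) by ring,
        Complex.exp_add, exp_neg_pi_I]
      ring
    have E3 : Complex.exp (-(2 * (Real.pi:ℂ) * I * (1 / 2))) = -1 := by
      rw [show -(2 * (Real.pi:ℂ) * I * (1 / 2)) = -((Real.pi:ℂ) * I) by ring, exp_neg_pi_I]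
    have c1 : s₁ / ((Real.pi : ℂ) * I) * Complex.exp ((Real.pi : ℂ) * I * (z + τ)) *
        phi τ (τ / 2) (z + τ)
        = s₁ / ((Real.pi : ℂ) * I) * Complex.exp ((Real.pi : ℂ) * I * z) * phi τ (τ / 2) z := by
      rw [phi_add_tau]
      linear_combination (s₁ / ((Real.pi : ℂ) * I) * phi τ (τ / 2) z) * E1
    have c2 : s₂ / ((Real.pi : ℂ) * I) * Complex.exp ((Real.pi : ℂ) * I * (z + τ)) *
        phi τ ((1 + τ) / 2) (z + τ)
        = -(s₂ / ((Real.pi : ℂ) * I) * Complex.exp ((Real.pi : ℂ) * I * z) *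
            phi τ ((1 + τ) / 2) z) := by
      rw [phi_add_tau]
      linear_combination (s₂ / ((Real.pi : ℂ) * I) * phi τ ((1 + τ) / 2) z) * E2
    have c3 : s₃ / ((Real.pi : ℂ) * I) * phi τ (1 / 2) (z + τ)
        = -(s₃ / ((Real.pi : ℂ) * I) * phi τ (1 / 2) z) := by
      rw [phi_add_tau]
      linear_combination (s₃ / ((Real.pi : ℂ) * I) * phi τ (1 / 2) z) * E3
    unfold sklyaninLax
    rw [c1, c2, c3, conj1]

end
end

section
/- Let a, b, c ∈ ℂ. On ℂ⁴ with coordinates s_0, s_1, s_2, s_3, define the antisymmetric structure functions of the quadratic bracket family by: P(s_0,s_1) = −b s_2 s_3, P(s_0,s_2) = a s_1 s_3, P(s_0,s_3) = −c s_1 s_2, P(s_1,s_2) = −s_0 s_3, P(s_1,s_3) = s_0 s_2, P(s_2,s_3) = −s_0 s_1. Then the Jacobi identity — for all indices i, j, k ∈ {0,1,2,3} and all points p ∈ ℂ⁴, Σ_{l=0}^{3} [ P_{il}(p) ∂P_{jk}/∂s_l(p) + P_{jl}(p) ∂P_{ki}/∂s_l(p) + P_{kl}(p) ∂P_{ij}/∂s_l(p)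 ] = 0 — holds if and only if a = b + c. -/
open BigOperators

noncomputable section

/-- Partial derivative of `f : ℂⁿ → ℂ` in the `l`-th coordinate at the point `p`. -/
def pderiv' {n : ℕ} (l : Fin n) (f : (Fin n → ℂ) → ℂ) (p : Fin n → ℂ) : ℂ :=
  deriv (fun t => f (Function.update p l t)) (p l)

/-- Antisymmetric structure functions of the quadratic bracket family on ℂ⁴,
coordinates `s₀, s₁, s₂, s₃`. -/
def Pquad (a b c : ℂ) (i j : Fin 4) (s : Fin 4 → ℂ) : ℂ :=
  !![0,              -b * s 2 * s 3, a * s 1 * s 3, -c * s 1 * s 2;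
     b * s 2 * s 3,  0,              -(s 0) * s 3,  (s 0) * s 2;
     -a * s 1 * s 3, (s 0) * s 3,    0,             -(s 0) * s 1;
     c * s 1 * s 2,  -(s 0) * s 2,   (s 0) * s 1,   0] i j

lemma deriv_cmul (k x : ℂ) : deriv (fun t : ℂ => k * t) x = k := by
  simpa using ((hasDerivAt_id x).const_mul k).deriv

set_option maxHeartbeats 4000000 in
/-- the quadratic bracket family on ℂ⁴ satisfies the Jacobi
identity if and only if `a = b + c`. -/
theorem statement12 (a b c : ℂ) :
    (∀ (i j k : Fin 4) (p : Fin 4 → ℂ),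
      ∑ l : Fin 4,
        (Pquad a b c i l p * pderiv' l (Pquad a b c j k) p +
         Pquad a b c j l p * pderiv' l (Pquad a b c k i) p +
         Pquad a b c k l p * pderiv' l (Pquad a b c i j) p) = 0) ↔ a = b + c := by
  constructor
  · intro H
    have h := H 0 1 2 (fun _ => 1)
    simp [Fin.sum_univ_four, pderiv', Pquad, Function.update, deriv_const_mul_field',
      deriv_mul_const_field', deriv_cmul] at h
    linear_combination -h
  · intro h i j k p
    subst h
    fin_cases i <;> fin_cases j <;> fin_cases k <;>
      simp [Fin.sum_univ_four, pderiv', Pquad, Function.update, deriv_const_mul_field',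
        deriv_mul_const_field', deriv_cmul] <;>
      ring

end
end

section
/- Let a, b, c ∈ ℂ with a = b + c, and let P_{ij} be the quadratic Sklyanin structure functions on ℂ⁴: P(s_0,s_1) = −b s_2 s_3, P(s_0,s_2) = a s_1 s_3, P(s_0,s_3) = −c s_1 s_2, P(s_1,s_2) = −s_0 s_3, P(s_1,s_3) = s_0 s_2, P(s_2,s_3) = −s_0 s_1 (extended antisymmetrically). Then the polynomials K_0 = s_1² + s_2² + s_3² and K_1 = s_0² + a s_1² + b s_2² are Casimir functions: for every index i ∈ {0,1,2,3} and every point p ∈ ℂ⁴, Σ_{l=0}^{3} (∂K_0/∂s_l)(p) · P_{li}(p) = 0 and Σ_{l=0}^{3} (∂K_1/∂s_l)(p) · P_{li}(p) = 0. (These two Casimirs cut out the two-dimensional symplectic leaves of Sklyanin's quadratic bracket.) -/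
open BigOperators

noncomputable section

/-- `K₀ = s₁² + s₂² + s₃²`. -/
def K0 (s : Fin 4 → ℂ) : ℂ := (s 1) ^ 2 + (s 2) ^ 2 + (s 3) ^ 2

/-- `K₁ = s₀² + a s₁² + b s₂²`. -/
def K1 (a b : ℂ) (s : Fin 4 → ℂ) : ℂ := (s 0) ^ 2 + a * (s 1) ^ 2 + b * (s 2) ^ 2


lemma dK0 (p : Fin 4 → ℂ) :
    pderiv' 0 K0 p = 0 ∧ pderiv' 1 K0 p = 2 * p 1 ∧
    pderiv' 2 K0 p = 2 * p 2 ∧ pderiv' 3 K0 p = 2 * p 3 := by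
  refine ⟨?_, ?_, ?_, ?_⟩ <;> simp [pderiv', K0, Function.update]

lemma dK1 (a b : ℂ) (p : Fin 4 → ℂ) :
    pderiv' 0 (K1 a b) p = 2 * p 0 ∧ pderiv' 1 (K1 a b) p = a * (2 * p 1) ∧
    pderiv' 2 (K1 a b) p = b * (2 * p 2) ∧ pderiv' 3 (K1 a b) p = 0 := by
  refine ⟨?_, ?_, ?_, ?_⟩ <;> simp [pderiv', K1, Function.update, mul_comm]

/-- for `a = b + c`, the polynomials `K₀ = s₁²+s₂²+s₃²` and
`K₁ = s₀² + a s₁² + b s₂²` are Casimir functions of the quadratic Sklyanin bracket. -/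
theorem statement14 (a b c : ℂ) (habc : a = b + c) :
    ∀ (i : Fin 4) (p : Fin 4 → ℂ),
      (∑ l : Fin 4, pderiv' l K0 p * Pquad a b c l i p) = 0 ∧
      (∑ l : Fin 4, pderiv' l (K1 a b) p * Pquad a b c l i p) = 0 := by
  intro i p
  obtain ⟨h0, h1, h2, h3⟩ := dK0 p
  obtain ⟨g0, g1, g2, g3⟩ := dK1 a b p
  subst habc
  fin_cases i <;>
    constructor <;>
      · simp only [Fin.sum_univ_four, h0, h1, h2, h3, g0, g1, g2, g3]
        simp [Pquad]
        try ring


end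
end

section
/- Let a, b, c ∈ ℂ with a = b + c, and let P be the extended quadratic Sklyanin structure functions on ℂ⁵ with coordinates u, s_0, s_1, s_2, s_3: P(s_0,s_1) = −b s_2 s_3, P(s_0,s_2) = a s_1 s_3, P(s_0,s_3) = −c s_1 s_2, P(s_1,s_2) = −s_0 s_3, P(s_1,s_3) = s_0 s_2, P(s_2,s_3) = −s_0 s_1, P(u,s_i) = s_i for i = 0,1,2,3 (extended antisymmetrically). Set N = s_0² + a s_1² + b s_2² and D = s_1² + s_2² + s_3². Then the rational function N/D is a Casimir of the extended bracket, in the cleared-denominator sense: for every coordinate x ∈ {u, s_0, s_1, s_2, s_3} and every point p ∈ ℂ⁵, Σ_{l} [ (∂N/∂x_l)(p) · D(p) − N(p) · (∂D/∂x_l)(p) ] · P(x_l, x)(p) = 0, the sum running over all five coordinates x_l. (Hence the symplectic leaves of the extended algebra are given by the single condition δ(N/D) = 0 and have dimension 4.) -/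
open BigOperators

noncomputable section

/-- Antisymmetric structure functions of the extended quadratic Sklyanin bracket on ℂ⁵,
coordinates `x₀ = u, x₁ = s₀, x₂ = s₁, x₃ = s₂, x₄ = s₃`. -/
def Pext (a b c : ℂ) (i j : Fin 5) (p : Fin 5 → ℂ) : ℂ :=
  !![0,      p 1,             p 2,            p 3,            p 4;
     -p 1,   0,               -b * p 3 * p 4, a * p 2 * p 4,  -c * p 2 * p 3;
     -p 2,   b * p 3 * p 4,   0,              -(p 1) * p 4,   (p 1) * p 3;
     -p 3,   -a * p 2 * p 4,  (p 1) * p 4,    0,              -(p 1) * p 2;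
     -p 4,   c * p 2 * p 3,   -(p 1) * p 3,   (p 1) * p 2,    0] i j

/-- `N = s₀² + a s₁² + b s₂²` as a function on ℂ⁵. -/
def Npoly (a b : ℂ) (p : Fin 5 → ℂ) : ℂ := (p 1) ^ 2 + a * (p 2) ^ 2 + b * (p 3) ^ 2

/-- `D = s₁² + s₂² + s₃²` as a function on ℂ⁵. -/
def Dpoly (p : Fin 5 → ℂ) : ℂ := (p 2) ^ 2 + (p 3) ^ 2 + (p 4) ^ 2

lemma pdN0 (a b : ℂ) (p : Fin 5 → ℂ) : pderiv' 0 (Npoly a b) p = 0 := by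
  simp [pderiv', Npoly, Function.update_self, Function.update_of_ne]

lemma pdD0 (p : Fin 5 → ℂ) : pderiv' 0 Dpoly p = 0 := by
  simp [pderiv', Dpoly, Function.update_self, Function.update_of_ne]

lemma pdN1 (a b : ℂ) (p : Fin 5 → ℂ) : pderiv' 1 (Npoly a b) p = 2 * p 1 := by
  simp [pderiv', Npoly, Function.update_self, Function.update_of_ne]

lemma pdD1 (p : Fin 5 → ℂ) : pderiv' 1 Dpoly p = 0 := by
  simp [pderiv', Dpoly, Function.update_self, Function.update_of_ne]

lemma pdN2 (a b : ℂ) (p : Fin 5 → ℂ) : pderiv' 2 (Npoly a b) p = a * (2 * p 2) := by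
  simp [pderiv', Npoly, Function.update_self, Function.update_of_ne]

lemma pdD2 (p : Fin 5 → ℂ) : pderiv' 2 Dpoly p = 2 * p 2 := by
  simp [pderiv', Dpoly, Function.update_self, Function.update_of_ne]

lemma pdN3 (a b : ℂ) (p : Fin 5 → ℂ) : pderiv' 3 (Npoly a b) p = b * (2 * p 3) := by
  simp [pderiv', Npoly, Function.update_self, Function.update_of_ne]

lemma pdD3 (p : Fin 5 → ℂ) : pderiv' 3 Dpoly p = 2 * p 3 := by
  simp [pderiv', Dpoly, Function.update_self, Function.update_of_ne]

lemma pdN4 (a b : ℂ) (p : Fin 5 → ℂ) : pderiv' 4 (Npoly a b) p = 0 := by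
  simp [pderiv', Npoly, Function.update_self, Function.update_of_ne]

lemma pdD4 (p : Fin 5 → ℂ) : pderiv' 4 Dpoly p = 2 * p 4 := by
  simp [pderiv', Dpoly, Function.update_self, Function.update_of_ne]

lemma statement15_aux0 (b c : ℂ) (p : Fin 5 → ℂ) :
    ∑ l : Fin 5,
      (pderiv' l (Npoly (b+c) b) p * Dpoly p - Npoly (b+c) b p * pderiv' l Dpoly p) *
        Pext (b+c) b c l 0 p = 0 := by
  rw [Fin.sum_univ_five, pdN0, pdN1, pdN2, pdN3, pdN4, pdD0, pdD1, pdD2, pdD3, pdD4,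
      show Pext (b+c) b c 0 0 p = (0:ℂ) from rfl,
      show Pext (b+c) b c 1 0 p = -p 1 from rfl,
      show Pext (b+c) b c 2 0 p = -p 2 from rfl,
      show Pext (b+c) b c 3 0 p = -p 3 from rfl,
      show Pext (b+c) b c 4 0 p = -p 4 from rfl]
  simp only [Npoly, Dpoly]
  ring

lemma statement15_aux1 (b c : ℂ) (p : Fin 5 → ℂ) :
    ∑ l : Fin 5,
      (pderiv' l (Npoly (b+c) b) p * Dpoly p - Npoly (b+c) b p * pderiv' l Dpoly p) *
        Pext (b+c) b c l 1 p = 0 := by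
  rw [Fin.sum_univ_five, pdN0, pdN1, pdN2, pdN3, pdN4, pdD0, pdD1, pdD2, pdD3, pdD4,
      show Pext (b+c) b c 0 1 p = p 1 from rfl,
      show Pext (b+c) b c 1 1 p = (0:ℂ) from rfl,
      show Pext (b+c) b c 2 1 p = b * p 3 * p 4 from rfl,
      show Pext (b+c) b c 3 1 p = -(b+c) * p 2 * p 4 from rfl,
      show Pext (b+c) b c 4 1 p = c * p 2 * p 3 from rfl]
  simp only [Npoly, Dpoly]
  ring

lemma statement15_aux2 (b c : ℂ) (p : Fin 5 → ℂ) :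
    ∑ l : Fin 5,
      (pderiv' l (Npoly (b+c) b) p * Dpoly p - Npoly (b+c) b p * pderiv' l Dpoly p) *
        Pext (b+c) b c l 2 p = 0 := by
  rw [Fin.sum_univ_five, pdN0, pdN1, pdN2, pdN3, pdN4, pdD0, pdD1, pdD2, pdD3, pdD4,
      show Pext (b+c) b c 0 2 p = p 2 from rfl,
      show Pext (b+c) b c 1 2 p = -b * p 3 * p 4 from rfl,
      show Pext (b+c) b c 2 2 p = (0:ℂ) from rfl,
      show Pext (b+c) b c 3 2 p = (p 1) * p 4 from rfl,
      show Pext (b+c) b c 4 2 p = -(p 1) * p 3 from rfl]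
  simp only [Npoly, Dpoly]
  ring

lemma statement15_aux3 (b c : ℂ) (p : Fin 5 → ℂ) :
    ∑ l : Fin 5,
      (pderiv' l (Npoly (b+c) b) p * Dpoly p - Npoly (b+c) b p * pderiv' l Dpoly p) *
        Pext (b+c) b c l 3 p = 0 := by
  rw [Fin.sum_univ_five, pdN0, pdN1, pdN2, pdN3, pdN4, pdD0, pdD1, pdD2, pdD3, pdD4,
      show Pext (b+c) b c 0 3 p = p 3 from rfl,
      show Pext (b+c) b c 1 3 p = (b+c) * p 2 * p 4 from rfl,
      show Pext (b+c) b c 2 3 p = -(p 1) * p 4 from rfl,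
      show Pext (b+c) b c 3 3 p = (0:ℂ) from rfl,
      show Pext (b+c) b c 4 3 p = (p 1) * p 2 from rfl]
  simp only [Npoly, Dpoly]
  ring

lemma statement15_aux4 (b c : ℂ) (p : Fin 5 → ℂ) :
    ∑ l : Fin 5,
      (pderiv' l (Npoly (b+c) b) p * Dpoly p - Npoly (b+c) b p * pderiv' l Dpoly p) *
        Pext (b+c) b c l 4 p = 0 := by
  rw [Fin.sum_univ_five, pdN0, pdN1, pdN2, pdN3, pdN4, pdD0, pdD1, pdD2, pdD3, pdD4,
      show Pext (b+c) b c 0 4 p = p 4 from rfl,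
      show Pext (b+c) b c 1 4 p = -c * p 2 * p 3 from rfl,
      show Pext (b+c) b c 2 4 p = (p 1) * p 3 from rfl,
      show Pext (b+c) b c 3 4 p = -(p 1) * p 2 from rfl,
      show Pext (b+c) b c 4 4 p = (0:ℂ) from rfl]
  simp only [Npoly, Dpoly]
  ring

/-- for `a = b + c`, the rational function `N/D` with
`N = s₀² + a s₁² + b s₂²`, `D = s₁² + s₂² + s₃²` is a Casimir of the extended
quadratic Sklyanin bracket on ℂ⁵, in the cleared-denominator sense. -/
theorem statement15 (a b c : ℂ) (habc : a = b + c) :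
    ∀ (i : Fin 5) (p : Fin 5 → ℂ),
      ∑ l : Fin 5,
        (pderiv' l (Npoly a b) p * Dpoly p - Npoly a b p * pderiv' l Dpoly p) *
          Pext a b c l i p = 0 := by
  subst habc
  intro i p
  fin_cases i
  · exact statement15_aux0 b c p
  · exact statement15_aux1 b c p
  · exact statement15_aux2 b c p
  · exact statement15_aux3 b c p
  · exact statement15_aux4 b c p

end
end
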